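/- Let q ≥ 3 be an odd integer, τ = i·√q, and let w ≥ 3 be an odd integer. Set A := (q^{(w+1)/2} − 1)/2 (a rational integer), B := τ·(1 − q^{(w−1)/2})/2 (an element of ℤ[τ]), C := −A, t := (q+1)/2 and s := (−1)^{(w+1)/2}. Then: (a) 1 and −1 are minimal norm representatives modulo τ^w; (b) A − τ is a minimal norm representative modulo τ^w; (c) s·C is a minimal norm representative modulo τ^w; (d) −B − 1 is a minimal norm representative modulo τ^w; (e) s·C − t·τ^{w−1} is a minimal norm representative modulo τ^w; (f) in ℤ[τ] the identity (A − τ)·τ^{w−1} + s·C = s·τ^{2w} + (−B − 1)·τ^w + (s·C − t·τ^{w−1}) holds. -/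

import Mathlib

open Complex

noncomputable section

/-- The lattice `ℤ[τ] = {a + b·τ : a, b ∈ ℤ}` as a subset of `ℂ`. -/
def Ztau (τ : ℂ) : Set ℂ := {z | ∃ a b : ℤ, z = (a : ℂ) + (b : ℂ) * τ}

/-- `z` is divisible by `τ` in `ℤ[τ]`. -/
def TauDvd (τ : ℂ) (z : ℂ) : Prop := ∃ y ∈ Ztau τ, z = τ * y

/-- `x` is a minimal norm representative modulo `τ^w`: an element of `ℤ[τ]`,
not divisible by `τ`, of minimal norm in its residue class modulo `τ^w`. -/
def MinNormRep (τ : ℂ) (w : ℕ) (x : ℂ) : Prop :=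
  x ∈ Ztau τ ∧ ¬ TauDvd τ x ∧
    ∀ y ∈ Ztau τ, ‖x‖ ≤ ‖x - τ ^ w * y‖

/-- `τ = i·√q`. -/
def tau0 (q : ℤ) : ℂ := I * (Real.sqrt q : ℂ)

/-- `A = (q^{(w+1)/2} − 1)/2`. -/
def A19 (q : ℤ) (w : ℕ) : ℂ := ((q : ℂ) ^ ((w + 1) / 2) - 1) / 2

/-- `B = τ·(1 − q^{(w−1)/2})/2`. -/
def B19 (q : ℤ) (w : ℕ) : ℂ := tau0 q * (1 - (q : ℂ) ^ ((w - 1) / 2)) / 2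

/-- `C = −A`. -/
def C19 (q : ℤ) (w : ℕ) : ℂ := -(A19 q w)

/-- `t = (q+1)/2`. -/
def t19 (q : ℤ) : ℂ := ((q : ℂ) + 1) / 2

/-- `s = (−1)^{(w+1)/2}`. -/
def s19 (w : ℕ) : ℂ := (-1) ^ ((w + 1) / 2)

lemma key_ineq (M c : ℝ) (hM : 0 ≤ M) (hc : 2*|c| ≤ M) (k : ℤ) :
    c^2 ≤ (c - M*k)^2 := by
  rcases eq_or_ne k 0 with h | h
  · simp [h]
  · have hk : (1:ℝ) ≤ |(k:ℝ)| := by exact_mod_cast Int.one_le_abs h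
    have h1 : M ≤ |M * k| := by
      rw [abs_mul, _root_.abs_of_nonneg hM]; nlinarith
    have h2 : |M*k| - |c| ≤ |c - M*k| := by
      rw [abs_sub_comm]
      have := abs_sub_abs_le_abs_sub (M*k) c
      linarith
    have h3 : |c| ≤ |c - M*k| := by
      have := abs_nonneg c; linarith
    nlinarith [_root_.sq_abs c, _root_.sq_abs (c - M*k), abs_nonneg c, abs_nonneg (c - M*k)]

lemma tau_sq (q : ℤ) (hq : 0 ≤ q) : tau0 q ^ 2 = -(q:ℂ) := by
  unfold tau0
  rw [mul_pow, I_sq, ← ofReal_pow, Real.sq_sqrt (by exact_mod_cast hq)]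
  push_cast; ring

lemma re_elem (q : ℤ) (u v : ℤ) : ((u:ℂ) + (v:ℂ) * tau0 q).re = u := by
  simp [tau0]

lemma abs_sq_elem (q : ℤ) (hq : 0 ≤ q) (u v : ℤ) :
    ‖(u:ℂ) + (v:ℂ) * tau0 q‖^2 = (u:ℝ)^2 + (q:ℝ)*(v:ℝ)^2 := by
  rw [Complex.sq_norm, Complex.normSq_apply]
  simp [tau0]
  have h : Real.sqrt q * Real.sqrt q = (q:ℝ) := Real.mul_self_sqrt (by exact_mod_cast hq)
  nlinarith [h]

lemma minrep_neg {τ : ℂ} {w : ℕ} {x : ℂ} (h : MinNormRep τ w x) :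
    MinNormRep τ w (-x) := by
  obtain ⟨⟨a, b, hx⟩, hnd, hmin⟩ := h
  refine ⟨⟨-a, -b, by push_cast; rw [hx]; ring⟩, ?_, ?_⟩
  · rintro ⟨y, ⟨a', b', rfl⟩, hy⟩
    exact hnd ⟨-((a':ℂ) + (b':ℂ)*τ), ⟨-a', -b', by push_cast; ring⟩,
      by linear_combination -hy⟩
  · rintro y ⟨a', b', rfl⟩
    have := hmin (-((a':ℂ) + (b':ℂ)*τ)) ⟨-a', -b', by push_cast; ring⟩
    calc ‖-x‖ = ‖x‖ := norm_neg x
      _ ≤ ‖x - τ^w * -((a':ℂ) + (b':ℂ)*τ)‖ := this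
      _ = ‖-x - τ^w * ((a':ℂ) + (b':ℂ)*τ)‖ := by
          rw [show -x - τ^w * ((a':ℂ) + (b':ℂ)*τ) = -(x - τ^w * -((a':ℂ) + (b':ℂ)*τ)) by ring, norm_neg]

lemma minrep_of (q : ℤ) (hq : 3 ≤ q) (m w : ℕ) (hw : w = 2*m+1)
    (c d : ℤ) (hc : 2*|c| ≤ q^(m+1)) (hd : 2*|d| ≤ q^m) (hcq : ¬ (q ∣ c)) :
    MinNormRep (tau0 q) w ((c:ℂ) + (d:ℂ) * tau0 q) := by
  have hq0 : (0:ℤ) ≤ q := by linarith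
  have hτ2 : tau0 q ^ 2 = -(q:ℂ) := tau_sq q hq0
  refine ⟨⟨c, d, rfl⟩, ?_, ?_⟩
  · rintro ⟨y, ⟨a, b, rfl⟩, hy⟩
    have hy' : (c:ℂ) + (d:ℂ) * tau0 q = ((-q*b : ℤ):ℂ) + ((a:ℤ):ℂ) * tau0 q := by
      rw [hy]; push_cast; linear_combination (b:ℂ) * hτ2
    have := congrArg Complex.re hy'
    rw [re_elem, re_elem] at this
    have hcb : c = -q*b := by exact_mod_cast this
    exact hcq ⟨-b, by linarith [hcb]⟩
  · rintro y ⟨a, b, rfl⟩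
    set τ := tau0 q
    have hpow : τ ^ w = (-(q:ℂ))^m * τ := by
      rw [hw, pow_succ, pow_mul, hτ2]
    set c' : ℤ := c + (-1)^m * q^(m+1) * b with hc'
    set d' : ℤ := d - (-1)^m * q^m * a with hd'
    have hx : (c:ℂ) + (d:ℂ)*τ - τ^w * ((a:ℂ) + (b:ℂ)*τ)
        = (c':ℂ) + (d':ℂ)*τ := by
      rw [hpow, hc', hd']; push_cast
      linear_combination (-(-(q:ℂ))^m * b) * hτ2
    rw [hx]
    have h1 := abs_sq_elem q hq0 c d
    have h2 := abs_sq_elem q hq0 c' d'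
    have hMc : (0:ℝ) ≤ (q:ℝ)^(m+1) := by positivity
    have hMd : (0:ℝ) ≤ (q:ℝ)^m := by positivity
    have key1 : ((c:ℝ))^2 ≤ ((c':ℝ))^2 := by
      have hk := key_ineq ((q:ℝ)^(m+1)) (c:ℝ) hMc (by exact_mod_cast hc) (-((-1)^m*b))
      have e : ((c':ℝ)) = (c:ℝ) - (q:ℝ)^(m+1) * ((-((-1)^m*b) : ℤ):ℝ) := by
        rw [hc']; push_cast; ring
      rwa [e]
    have key2 : ((d:ℝ))^2 ≤ ((d':ℝ))^2 := by
      have hk := key_ineq ((q:ℝ)^m) (d:ℝ) hMd (by exact_mod_cast hd) ((-1)^m*a)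
      have e : ((d':ℝ)) = (d:ℝ) - (q:ℝ)^m * ((((-1)^m*a) : ℤ):ℝ) := by
        rw [hd']; push_cast; ring
      rwa [e]
    have hqR : (0:ℝ) ≤ (q:ℝ) := by exact_mod_cast hq0
    have hle : ‖(c:ℂ)+(d:ℂ)*τ‖^2 ≤ ‖(c':ℂ)+(d':ℂ)*τ‖^2 := by
      rw [h1, h2]; nlinarith
    have := Real.sqrt_le_sqrt hle
    rwa [Real.sqrt_sq (norm_nonneg _), Real.sqrt_sq (norm_nonneg _)] at this
/-- The counter-example construction for `p = 0`, odd `q ≥ 3`, and odd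
`w ≥ 3`: `A` is a rational integer, `B ∈ ℤ[τ]`, (a)–(e) the listed elements
are minimal norm representatives modulo `τ^w`, and (f) the stated identity
holds in `ℤ[τ]`. -/
theorem nonopt_construction_p0_q_odd (q : ℤ) (hq : 3 ≤ q) (hqo : Odd q)
    (w : ℕ) (hw : 3 ≤ w) (hwodd : Odd w) :
    (∃ a : ℤ, A19 q w = (a : ℂ)) ∧
    B19 q w ∈ Ztau (tau0 q) ∧
    (MinNormRep (tau0 q) w 1 ∧ MinNormRep (tau0 q) w (-1)) ∧
    MinNormRep (tau0 q) w (A19 q w - tau0 q) ∧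
    MinNormRep (tau0 q) w (s19 w * C19 q w) ∧
    MinNormRep (tau0 q) w (-(B19 q w) - 1) ∧
    MinNormRep (tau0 q) w (s19 w * C19 q w - t19 q * tau0 q ^ (w - 1)) ∧
    (A19 q w - tau0 q) * tau0 q ^ (w - 1) + s19 w * C19 q w
      = s19 w * tau0 q ^ (2 * w) + (-(B19 q w) - 1) * tau0 q ^ w
        + (s19 w * C19 q w - t19 q * tau0 q ^ (w - 1)) := by
  obtain ⟨m, hwm⟩ : ∃ m : ℕ, w = 2*m + 1 := by
    obtain ⟨m, hm⟩ := hwodd; exact ⟨m, by omega⟩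
  have hm1 : 1 ≤ m := by omega
  have hq0 : (0:ℤ) ≤ q := by linarith
  have hτ2 : tau0 q ^ 2 = -(q:ℂ) := tau_sq q hq0
  obtain ⟨u, hu⟩ : ∃ u : ℤ, q = 2*u + 1 := by obtain ⟨u, hu⟩ := hqo; exact ⟨u, by omega⟩
  obtain ⟨k, hk⟩ : ∃ k : ℤ, q^(m+1) = 2*k + 1 := by
    obtain ⟨k, hk⟩ := hqo.pow (n := m+1); exact ⟨k, by omega⟩
  obtain ⟨l, hl⟩ : ∃ l : ℤ, q^m = 2*l + 1 := by
    obtain ⟨l, hl⟩ := hqo.pow (n := m); exact ⟨l, by omega⟩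
  have hqm : 3 ≤ q^m := le_trans hq (le_self_pow₀ (by linarith) (by omega))
  have hqm1 : 3 ≤ q^(m+1) := le_trans hq (le_self_pow₀ (by linarith) (by omega))
  have hqmm : q^(m+1) = q * q^m := by rw [pow_succ]; ring
  have hqm1' : q^m + 2 ≤ q^(m+1) := by nlinarith
  have huC : (q:ℂ) = 2*u + 1 := by exact_mod_cast hu
  have hkC : (q:ℂ)^(m+1) = 2*k + 1 := by exact_mod_cast hk
  have hlC : (q:ℂ)^m = 2*l + 1 := by exact_mod_cast hl
  have e1 : (w+1)/2 = m+1 := by omega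
  have e2 : (w-1)/2 = m := by omega
  have e3 : w - 1 = 2*m := by omega
  have hA : A19 q w = (k:ℂ) := by
    unfold A19; rw [e1, hkC]; ring
  have hB : B19 q w = -(l:ℂ) * tau0 q := by
    unfold B19; rw [e2, hlC]; ring
  have hs : s19 w = (-1:ℂ)^(m+1) := by unfold s19; rw [e1]
  -- sign σ = (-1)^m
  obtain ⟨σ, hσ1, hσC⟩ : ∃ σ : ℤ, (σ = 1 ∨ σ = -1) ∧ ((-1:ℂ)^m = (σ:ℂ)) := by
    rcases Nat.even_or_odd m with hme | hmo
    · exact ⟨1, Or.inl rfl, by rw [hme.neg_one_pow]; norm_num⟩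
    · exact ⟨-1, Or.inr rfl, by rw [hmo.neg_one_pow]; norm_num⟩
  have hσabs : |σ| = 1 := by rcases hσ1 with rfl | rfl <;> decide
  have hm2 : tau0 q ^ (2*m) = (σ:ℂ) * (q:ℂ)^m := by
    rw [pow_mul, hτ2, neg_pow, hσC]
  have hpw : tau0 q ^ w = (σ:ℂ) * (q:ℂ)^m * tau0 q := by
    rw [hwm, pow_succ, hm2]
  have hndk : ¬ q ∣ k := by
    intro h
    have h2 : q ∣ q^(m+1) := dvd_pow_self q (Nat.succ_ne_zero m)
    have h3 : q ∣ 1 := by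
      have h4 : q ∣ 2*k+1 := hk ▸ h2
      simpa using h4.sub (h.mul_left 2)
    have := Int.le_of_dvd one_pos h3; omega
  have hnd1 : ¬ q ∣ (1:ℤ) := by
    intro h; have := Int.le_of_dvd one_pos h; omega
  have hck : 2*|k| ≤ q^(m+1) := by
    have : |k| = k := _root_.abs_of_nonneg (by omega)
    omega
  have hcl : 2*|l| ≤ q^m := by
    have : |l| = l := _root_.abs_of_nonneg (by omega)
    omega
  have h2q : (2:ℤ) ≤ q^m := by omega
  have h2q1 : (2:ℤ) ≤ q^(m+1) := by omega
  have h1abs : (2:ℤ)*|(1:ℤ)| ≤ q^(m+1) := by simp; omega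
  have h1abs' : (2:ℤ)*|(-1:ℤ)| ≤ q^m := by simp; omega
  have h1abs'' : (2:ℤ)*|(-1:ℤ)| ≤ q^(m+1) := by simp; omega
  have h0abs : (2:ℤ)*|(0:ℤ)| ≤ q^m := by simp; positivity
  -- (a) 1 and -1
  have R1 : MinNormRep (tau0 q) w 1 := by
    have := minrep_of q hq m w hwm 1 0 h1abs h0abs hnd1
    simpa using this
  have Rm1 : MinNormRep (tau0 q) w (-1) := by
    have := minrep_neg R1; simpa using this
  -- (b) A - τ
  have Rb : MinNormRep (tau0 q) w (A19 q w - tau0 q) := by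
    have hb : A19 q w - tau0 q = ((k:ℤ):ℂ) + ((-1:ℤ):ℂ) * tau0 q := by
      rw [hA]; push_cast; ring
    rw [hb]; exact minrep_of q hq m w hwm k (-1) hck h1abs' hndk
  -- (c) s·C
  have hsc : s19 w * C19 q w = (σ:ℂ) * (k:ℂ) := by
    unfold C19; rw [hs, hA, pow_succ, hσC]; ring
  have hndσk : ¬ q ∣ σ*k := by
    intro h; apply hndk
    have h2 : σ * (σ * k) = k := by rcases hσ1 with rfl | rfl <;> ring
    exact h2 ▸ h.mul_left σ
  have hckσ : 2*|σ*k| ≤ q^(m+1) := by rw [abs_mul, hσabs, one_mul]; exact hck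
  have Rc : MinNormRep (tau0 q) w (s19 w * C19 q w) := by
    have hc5 : s19 w * C19 q w = ((σ*k:ℤ):ℂ) + ((0:ℤ):ℂ) * tau0 q := by
      rw [hsc]; push_cast; ring
    rw [hc5]; exact minrep_of q hq m w hwm (σ*k) 0 hckσ h0abs hndσk
  -- (d) -B - 1
  have Rd : MinNormRep (tau0 q) w (-(B19 q w) - 1) := by
    have hd : -(B19 q w) - 1 = ((-1:ℤ):ℂ) + ((l:ℤ):ℂ) * tau0 q := by
      rw [hB]; push_cast; ring
    rw [hd]
    refine minrep_of q hq m w hwm (-1) l h1abs'' hcl ?_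
    intro h; apply hnd1; exact (dvd_neg).mp h
  -- (e) s·C - t·τ^{w-1}
  have Re : MinNormRep (tau0 q) w (s19 w * C19 q w - t19 q * tau0 q ^ (w-1)) := by
    set e0 : ℤ := (u+1)*q^m - k with he0
    have he0' : 2*e0 = q^m + 1 := by
      have : 2*((u+1)*q^m) = (q+1)*q^m := by rw [hu]; ring
      have h6 : (q+1)*q^m = q^(m+1) + q^m := by rw [hqmm]; ring
      omega
    have he : s19 w * C19 q w - t19 q * tau0 q ^ (w-1)
        = ((-σ*e0:ℤ):ℂ) + ((0:ℤ):ℂ) * tau0 q := by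
      rw [e3, hm2, hsc]; unfold t19; rw [he0]; push_cast
      linear_combination (-(σ:ℂ)*(q:ℂ)^m/2) * huC
    rw [he]
    refine minrep_of q hq m w hwm (-σ*e0) 0 ?_ h0abs ?_
    · have : |(-σ*e0)| = e0 := by
        rw [abs_mul, abs_neg, hσabs, one_mul, _root_.abs_of_nonneg (by omega)]
      omega
    · intro h
      have h2 : σ * (-(-σ*e0)) = e0 := by rcases hσ1 with rfl | rfl <;> ring
      have h3 : q ∣ e0 := h2 ▸ ((dvd_neg.mpr h).mul_left σ)
      have h4 : q ∣ q^m := dvd_pow_self q (by omega)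
      have h5 := h3.mul_left 2
      have h7 : 2*e0 - q^m = 1 := by omega
      have h6 : q ∣ 1 := h7 ▸ (h5.sub h4)
      have := Int.le_of_dvd one_pos h6; omega
  refine ⟨⟨k, hA⟩, ⟨0, -l, by rw [hB]; push_cast; ring⟩, ⟨R1, Rm1⟩, Rb, Rc, Rd, Re, ?_⟩
  -- (f) identity
  have h2w : tau0 q ^ (2*w) = -((q:ℂ)^(2*m+1)) := by
    rw [pow_mul, hτ2, hwm, Odd.neg_pow ⟨m, by ring⟩]
  rw [e3, hm2, hsc, hA, hB, hpw, h2w, hs, pow_succ, hσC]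
  unfold t19
  linear_combination (-(σ:ℂ)*(l:ℂ)*(q:ℂ)^m) * hτ2 + (-(σ:ℂ)*(q:ℂ)^m/2) * hkC
    + (-(σ:ℂ)*(q:ℂ)^(m+1)/2) * hlC
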